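/- arXiv:1603.02660 — 5 statements merged into one kernel-verified Lean document; each statement's English description precedes it below -/
import Mathlib

section
/- Let τ* ∈ ℂ with Im τ* > 0 and set K = conj(τ*) − τ*. For any τ ∈ ℂ with Im τ > 0, define s = (τ* − conj(τ*))·(τ − τ*)/(τ − conj(τ*)) and j = (τ − conj(τ*))/(τ* − conj(τ*)). Then j²·(1/Im τ) − 2i·j·(1/(τ* − conj(τ*))) = 2i·(conj(s)/K²)/(1 + s·conj(s)/K²). -/
open Complex

/-- The Cayley transformation of the non-holomorphic quantity `Y(τ) = 1/Im τ`:
with `s` the normalized Cayley transform of `τ` based at `τ*` and `j` the associated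
automorphy factor, one has
`j²·(1/Im τ) − 2i·j·(1/(τ* − conj τ*)) = 2i·(conj s/K²)/(1 + s·conj s/K²)`
where `K = conj τ* − τ*`. -/
theorem cayley_transform_of_Y
    (τstar : ℂ) (hτstar : 0 < τstar.im)
    (K : ℂ) (hK : K = (starRingEnd ℂ) τstar - τstar)
    (τ : ℂ) (hτ : 0 < τ.im)
    (s j : ℂ)
    (hs : s = (τstar - (starRingEnd ℂ) τstar) * (τ - τstar) / (τ - (starRingEnd ℂ) τstar))
    (hj : j = (τ - (starRingEnd ℂ) τstar) / (τstar - (starRingEnd ℂ) τstar)) :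
    j ^ 2 * (1 / (τ.im : ℂ)) - 2 * Complex.I * j * (1 / (τstar - (starRingEnd ℂ) τstar)) =
      2 * Complex.I * ((starRingEnd ℂ) s / K ^ 2) / (1 + s * (starRingEnd ℂ) s / K ^ 2) := by
  have him : (τ.im : ℂ) ≠ 0 := by exact_mod_cast hτ.ne'
  have hims : (τstar.im : ℂ) ≠ 0 := by exact_mod_cast hτstar.ne'
  have hA : τ - (starRingEnd ℂ) τstar ≠ 0 := by
    intro h
    have := congrArg Complex.im h
    simp [Complex.sub_im, Complex.conj_im] at this
    linarith
  have hB : (starRingEnd ℂ) τ - τstar ≠ 0 := by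
    intro h
    have := congrArg Complex.im h
    simp [Complex.sub_im, Complex.conj_im] at this
    linarith
  have hC : τstar - (starRingEnd ℂ) τstar ≠ 0 := by
    intro h
    have := congrArg Complex.im h
    simp [Complex.sub_im, Complex.conj_im] at this
    linarith
  have hτc : τ - (starRingEnd ℂ) τ ≠ 0 := by
    intro h
    have := congrArg Complex.im h
    simp [Complex.sub_im, Complex.conj_im] at this
    linarith
  have hdc : (starRingEnd ℂ) τstar - τstar ≠ 0 := by
    intro h
    have := congrArg Complex.im h
    simp [Complex.sub_im, Complex.conj_im] at this
    linarith
  have hI : (I : ℂ) ≠ 0 := Complex.I_ne_zero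
  have f1 : (τ.im : ℂ) = (τ - (starRingEnd ℂ) τ) / (2 * I) := by
    have := Complex.sub_conj τ
    push_cast at this
    field_simp [this]
    rw [this]; ring
  set c := (starRingEnd ℂ) τ with hcdef
  set d := (starRingEnd ℂ) τstar with hddef
  have hdd : (starRingEnd ℂ) d = τstar := by rw [hddef, Complex.conj_conj]
  have hden : 1 + s * (starRingEnd ℂ) s / K ^ 2 =
      (τ - c) * (d - τstar) / ((τ - d) * (c - τstar)) := by
    subst hs hK
    simp only [map_div₀, map_mul, map_sub, Complex.conj_conj, ← hcdef, ← hddef, hdd]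
    field_simp
    ring
  have hdenne : 1 + s * (starRingEnd ℂ) s / K ^ 2 ≠ 0 := by
    rw [hden]
    exact div_ne_zero (mul_ne_zero hτc hdc) (mul_ne_zero hA hB)
  rw [hden] at hdenne ⊢
  subst hs hj hK
  simp only [map_div₀, map_mul, map_sub, Complex.conj_conj, ← hcdef, ← hddef, hdd]
  rw [f1]
  field_simp
  ring
end

section
/- Let D ⊆ ℂ be a connected open set containing 0, and let f₁, f₂, f₃, f₄, f₅, f₆ : D → ℂ be holomorphic functions satisfying on D the equations f₁·f₄ = f₂·f₅, f₁·f₅′ = 2·f₅·f₁′, and 2·f₁·f₆ = f₁·f₃ + f₂·f₄, together with the boundary values f₁(0) = 1 and f₅(0) = 1/3. Then f₅ = f₁²/3, f₄ = f₁·f₂/3, and f₆ = (3·f₃ + f₂²)/6 on all of D. -/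
open Complex

/-- From the WDVV equations `f₁f₄ = f₂f₅`, `f₁f₅′ = 2f₅f₁′`, `2f₁f₆ = f₁f₃ + f₂f₄` of the
FJRW theory of the Fermat cubic, with boundary values `f₁(0) = 1` and `f₅(0) = 1/3`, one
solves `f₅ = f₁²/3`, `f₄ = f₁f₂/3`, `f₆ = (3f₃ + f₂²)/6`. -/
theorem fjrw_cubic_solve_f4_f5_f6
    (D : Set ℂ) (hD : IsOpen D) (hconn : IsConnected D) (h0 : (0 : ℂ) ∈ D)
    (f₁ f₂ f₃ f₄ f₅ f₆ : ℂ → ℂ)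
    (hd₁ : DifferentiableOn ℂ f₁ D) (hd₂ : DifferentiableOn ℂ f₂ D)
    (hd₃ : DifferentiableOn ℂ f₃ D) (hd₄ : DifferentiableOn ℂ f₄ D)
    (hd₅ : DifferentiableOn ℂ f₅ D) (hd₆ : DifferentiableOn ℂ f₆ D)
    (heq1 : ∀ z ∈ D, f₁ z * f₄ z = f₂ z * f₅ z)
    (heq2 : ∀ z ∈ D, f₁ z * deriv f₅ z = 2 * f₅ z * deriv f₁ z)
    (heq3 : ∀ z ∈ D, 2 * f₁ z * f₆ z = f₁ z * f₃ z + f₂ z * f₄ z)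
    (hf₁0 : f₁ 0 = 1) (hf₅0 : f₅ 0 = 1 / 3) :
    ∀ z ∈ D,
      f₅ z = f₁ z ^ 2 / 3 ∧ f₄ z = f₁ z * f₂ z / 3 ∧ f₆ z = (3 * f₃ z + f₂ z ^ 2) / 6 := by
  have hpre : IsPreconnected D := hconn.isPreconnected
  -- the open set where f₁ ≠ 0
  have hUopen : IsOpen {z ∈ D | f₁ z ≠ 0} := by
    have : {z ∈ D | f₁ z ≠ 0} = D ∩ f₁ ⁻¹' {0}ᶜ := rfl
    rw [this]
    exact (hd₁.continuousOn.isOpen_inter_preimage hD isOpen_compl_singleton)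
  have h0U : (0 : ℂ) ∈ {z ∈ D | f₁ z ≠ 0} := ⟨h0, by simp [hf₁0]⟩
  obtain ⟨ε, hε, hball⟩ := Metric.isOpen_iff.1 hUopen 0 h0U
  set B := Metric.ball (0 : ℂ) ε with hB
  have hBD : B ⊆ D := fun z hz => (hball hz).1
  have hBne : ∀ z ∈ B, f₁ z ≠ 0 := fun z hz => (hball hz).2
  have h0B : (0 : ℂ) ∈ B := Metric.mem_ball_self hε
  -- derivatives at points of B
  have hder : ∀ z ∈ B, HasDerivAt (fun w => f₅ w / f₁ w ^ 2) 0 z := by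
    intro z hz
    have hz1 : DifferentiableAt ℂ f₁ z := (hd₁.differentiableAt (hD.mem_nhds (hBD hz)))
    have hz5 : DifferentiableAt ℂ f₅ z := (hd₅.differentiableAt (hD.mem_nhds (hBD hz)))
    have h1 : HasDerivAt f₁ (deriv f₁ z) z := hz1.hasDerivAt
    have h5 : HasDerivAt f₅ (deriv f₅ z) z := hz5.hasDerivAt
    have hsq : HasDerivAt (fun w => f₁ w ^ 2) (2 * f₁ z ^ (2 - 1) * deriv f₁ z) z := by
      simpa using h1.fun_pow 2
    have hne : f₁ z ^ 2 ≠ 0 := pow_ne_zero _ (hBne z hz)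
    have hdiv := h5.div hsq hne
    have key : (deriv f₅ z * f₁ z ^ 2 - f₅ z * (2 * f₁ z ^ (2 - 1) * deriv f₁ z)) /
        (f₁ z ^ 2) ^ 2 = 0 := by
      have hnum : deriv f₅ z * f₁ z ^ 2 - f₅ z * (2 * f₁ z ^ (2 - 1) * deriv f₁ z)
          = f₁ z * (f₁ z * deriv f₅ z - 2 * f₅ z * deriv f₁ z) := by ring
      rw [hnum, heq2 z (hBD hz), sub_self, mul_zero, zero_div]
    rw [key] at hdiv
    exact hdiv
  -- constancy on the ball
  have hconst : ∀ z ∈ B, f₅ z / f₁ z ^ 2 = 1 / 3 := by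
    intro z hz
    have hcv : Convex ℝ B := convex_ball 0 ε
    have hdf : DifferentiableOn ℂ (fun w => f₅ w / f₁ w ^ 2) B := fun w hw =>
      ((hder w hw).differentiableAt.differentiableWithinAt)
    have hzero : ∀ w ∈ B, fderivWithin ℂ (fun w => f₅ w / f₁ w ^ 2) B w = 0 := by
      intro w hw
      have : fderivWithin ℂ (fun w => f₅ w / f₁ w ^ 2) B w
          = fderiv ℂ (fun w => f₅ w / f₁ w ^ 2) w :=
        fderivWithin_of_isOpen Metric.isOpen_ball hw
      rw [this, (hder w hw).hasFDerivAt.fderiv]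
      ext
      simp
    have := hcv.is_const_of_fderivWithin_eq_zero hdf hzero hz h0B
    rw [this, hf₅0, hf₁0]
    norm_num
  -- f₅ = f₁²/3 on B
  have h5B : ∀ z ∈ B, f₅ z = f₁ z ^ 2 / 3 := by
    intro z hz
    have h := hconst z hz
    have hne : f₁ z ^ 2 ≠ 0 := pow_ne_zero _ (hBne z hz)
    rw [div_eq_iff hne] at h
    rw [h]; ring
  -- analyticity
  have ha₁ : AnalyticOnNhd ℂ f₁ D := hd₁.analyticOnNhd hD
  have ha₂ : AnalyticOnNhd ℂ f₂ D := hd₂.analyticOnNhd hD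
  have ha₃ : AnalyticOnNhd ℂ f₃ D := hd₃.analyticOnNhd hD
  have ha₄ : AnalyticOnNhd ℂ f₄ D := hd₄.analyticOnNhd hD
  have ha₅ : AnalyticOnNhd ℂ f₅ D := hd₅.analyticOnNhd hD
  have ha₆ : AnalyticOnNhd ℂ f₆ D := hd₆.analyticOnNhd hD
  have hBnhds : B ∈ nhds (0 : ℂ) := Metric.ball_mem_nhds 0 hε
  -- identity theorem for f₅
  have h5D : Set.EqOn f₅ (fun z => f₁ z ^ 2 / 3) D := by
    apply AnalyticOnNhd.eqOn_of_preconnected_of_eventuallyEq ha₅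
      (fun w hw => ((ha₁ w hw).pow 2).div analyticAt_const (by norm_num)) hpre h0
    filter_upwards [hBnhds] with z hz using h5B z hz
  -- f₄ on B
  have h4B : ∀ z ∈ B, f₄ z = f₁ z * f₂ z / 3 := by
    intro z hz
    have h1 := heq1 z (hBD hz)
    rw [h5D (hBD hz)] at h1
    have hne := hBne z hz
    apply mul_left_cancel₀ hne
    rw [h1]; ring
  have h4D : Set.EqOn f₄ (fun z => f₁ z * f₂ z / 3) D := by
    apply AnalyticOnNhd.eqOn_of_preconnected_of_eventuallyEq ha₄
      (fun w hw => ((ha₁ w hw).mul (ha₂ w hw)).div analyticAt_const (by norm_num)) hpre h0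
    filter_upwards [hBnhds] with z hz using h4B z hz
  -- f₆ on B
  have h6B : ∀ z ∈ B, f₆ z = (3 * f₃ z + f₂ z ^ 2) / 6 := by
    intro z hz
    have h3 := heq3 z (hBD hz)
    rw [h4D (hBD hz)] at h3
    have hne := hBne z hz
    have h2 : (2 : ℂ) * f₁ z ≠ 0 := mul_ne_zero two_ne_zero hne
    apply mul_left_cancel₀ h2
    rw [h3]; ring
  have h6D : Set.EqOn f₆ (fun z => (3 * f₃ z + f₂ z ^ 2) / 6) D := by
    apply AnalyticOnNhd.eqOn_of_preconnected_of_eventuallyEq ha₆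
      (fun w hw => ((analyticAt_const.mul (ha₃ w hw)).add ((ha₂ w hw).pow 2)).div
        analyticAt_const (by norm_num)) hpre h0
    filter_upwards [hBnhds] with z hz using h6B z hz
  intro z hz
  exact ⟨h5D hz, h4D hz, h6D hz⟩
end

section
/- Let D ⊆ ℂ be open and let f₁, f₂, f₃ : D → ℂ be holomorphic functions satisfying the pillowcase WDVV system on D. Define g₁ = −f₁, g₂ = f₂ + 2f₃, g₃ = f₃. Then on D: g₁′ + 2g₂g₁ = 4g₁g₃, g₂′ + 2g₃g₂ + g₃′ = 2g₁² + 2g₃², and g₃′ + g₃² = g₁². -/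
open Complex

/-- The pillowcase WDVV system:
`f₁′ + 2f₁f₂ = 0`, `f₂′ + 2f₂f₃ + f₃′ = 0`, `f₃′ + f₃² = f₁²` on a set `U ⊆ ℂ`. -/
def PillowcaseWDVV (U : Set ℂ) (f₁ f₂ f₃ : ℂ → ℂ) : Prop :=
  ∀ z ∈ U,
    deriv f₁ z + 2 * f₁ z * f₂ z = 0 ∧
    deriv f₂ z + 2 * f₂ z * f₃ z + deriv f₃ z = 0 ∧
    deriv f₃ z + f₃ z ^ 2 = f₁ z ^ 2

/-- If `(f₁, f₂, f₃)` satisfies the pillowcase WDVV system on an open set `D`, then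
`g₁ = −f₁`, `g₂ = f₂ + 2f₃`, `g₃ = f₃` satisfy the narrow WDVV equations
`g₁′ + 2g₂g₁ = 4g₁g₃`, `g₂′ + 2g₃g₂ + g₃′ = 2g₁² + 2g₃²`, `g₃′ + g₃² = g₁²`. -/
theorem pillowcase_narrow_equations
    (D : Set ℂ) (hD : IsOpen D)
    (f₁ f₂ f₃ : ℂ → ℂ)
    (hf₁ : DifferentiableOn ℂ f₁ D) (hf₂ : DifferentiableOn ℂ f₂ D)
    (hf₃ : DifferentiableOn ℂ f₃ D)
    (hf : PillowcaseWDVV D f₁ f₂ f₃) :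
    ∀ z ∈ D,
      deriv (fun w => -f₁ w) z + 2 * (f₂ z + 2 * f₃ z) * (-f₁ z) =
          4 * (-f₁ z) * f₃ z ∧
      deriv (fun w => f₂ w + 2 * f₃ w) z + 2 * f₃ z * (f₂ z + 2 * f₃ z) + deriv f₃ z =
          2 * (-f₁ z) ^ 2 + 2 * f₃ z ^ 2 ∧
      deriv f₃ z + f₃ z ^ 2 = (-f₁ z) ^ 2 := by
  intro z hz
  have h1 : DifferentiableAt ℂ f₁ z := (hf₁.differentiableAt (hD.mem_nhds hz))
  have h2 : DifferentiableAt ℂ f₂ z := (hf₂.differentiableAt (hD.mem_nhds hz))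
  have h3 : DifferentiableAt ℂ f₃ z := (hf₃.differentiableAt (hD.mem_nhds hz))
  obtain ⟨e1, e2, e3⟩ := hf z hz
  have d1 : deriv (fun w => -f₁ w) z = -deriv f₁ z := by
    exact deriv.neg
  have d2 : deriv (fun w => f₂ w + 2 * f₃ w) z = deriv f₂ z + 2 * deriv f₃ z := by
    rw [deriv_fun_add h2 (h3.const_mul 2), deriv_const_mul 2 h3]
  refine ⟨?_, ?_, ?_⟩
  · rw [d1]; linear_combination -e1
  · rw [d2]; linear_combination e2 + 2 * e3
  · linear_combination e3
end

section
/- Let D ⊆ ℂ be a connected open set containing 0 and let f₂, f₃, f₄ : D → ℂ be holomorphic satisfying f₂′ + 2f₂f₃ + f₃′ = 0 and f₄′ + 2f₄f₂ + f₂′ = 2f₂² on D, together with f₄(0) = f₂(0) + 2f₃(0). Then f₄ = f₂ + 2f₃ on D. -/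
open Complex

/-- In the FJRW theory of the pillowcase, the four-broad-point correlation function `f₄`
is determined by `f₂` and `f₃`: from the WDVV equations `f₂′ + 2f₂f₃ + f₃′ = 0` and
`f₄′ + 2f₄f₂ + f₂′ = 2f₂²` and the boundary value `f₄(0) = f₂(0) + 2f₃(0)`, one gets
`f₄ = f₂ + 2f₃`. -/
theorem pillowcase_f4_eq
    (D : Set ℂ) (hD : IsOpen D) (hconn : IsConnected D) (h0 : (0 : ℂ) ∈ D)
    (f₂ f₃ f₄ : ℂ → ℂ)
    (hf₂ : DifferentiableOn ℂ f₂ D) (hf₃ : DifferentiableOn ℂ f₃ D)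
    (hf₄ : DifferentiableOn ℂ f₄ D)
    (heq1 : ∀ z ∈ D, deriv f₂ z + 2 * f₂ z * f₃ z + deriv f₃ z = 0)
    (heq2 : ∀ z ∈ D, deriv f₄ z + 2 * f₄ z * f₂ z + deriv f₂ z = 2 * f₂ z ^ 2)
    (h0val : f₄ 0 = f₂ 0 + 2 * f₃ 0) :
    ∀ z ∈ D, f₄ z = f₂ z + 2 * f₃ z := by
  set g : ℂ → ℂ := fun z => f₄ z - f₂ z - 2 * f₃ z with hg_def
  have hgdiff : DifferentiableOn ℂ g D :=
    (hf₄.sub hf₂).sub (hf₃.const_mul 2)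
  -- the key ODE for g
  have hderiv : ∀ z ∈ D, deriv g z = -2 * f₂ z * g z := by
    intro z hz
    have h2 : DifferentiableAt ℂ f₂ z := hf₂.differentiableAt (hD.mem_nhds hz)
    have h3 : DifferentiableAt ℂ f₃ z := hf₃.differentiableAt (hD.mem_nhds hz)
    have h4 : DifferentiableAt ℂ f₄ z := hf₄.differentiableAt (hD.mem_nhds hz)
    have hgd : deriv g z = deriv f₄ z - deriv f₂ z - 2 * deriv f₃ z := by
      rw [hg_def]
      rw [deriv_fun_sub (h4.fun_sub h2) (h3.const_mul 2), deriv_fun_sub h4 h2, deriv_const_mul 2 h3]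
    rw [hgd, hg_def]
    linear_combination (heq2 z hz) - 2 * (heq1 z hz)
  obtain ⟨r, hr, hball⟩ := Metric.isOpen_iff.mp hD 0 h0
  -- g vanishes on the ball
  have key : ∀ z ∈ Metric.ball (0 : ℂ) r, g z = 0 := by
    intro z hz
    have hseg : ∀ t : ℝ, t ∈ Set.Icc (0:ℝ) 1 → (↑t * z) ∈ Metric.ball (0 : ℂ) r := by
      intro t ht
      rw [Metric.mem_ball, dist_zero_right] at hz ⊢
      calc ‖(↑t : ℂ) * z‖ = |t| * ‖z‖ := by rw [norm_mul, Complex.norm_real, Real.norm_eq_abs]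
        _ ≤ 1 * ‖z‖ := by
            apply mul_le_mul_of_nonneg_right _ (norm_nonneg z)
            rw [abs_le]; constructor <;> linarith [ht.1, ht.2]
        _ < r := by simpa using hz
    set y : ℝ → ℂ := fun t => g (↑t * z) with hy_def
    -- bound the coefficient on the segment
    obtain ⟨K, hK⟩ := (isCompact_Icc (a := (0:ℝ)) (b := 1)).exists_bound_of_continuousOn
      (f := fun t : ℝ => -2 * f₂ (↑t * z) * z)
      (by
        apply ContinuousOn.mul _ continuousOn_const
        apply ContinuousOn.mul continuousOn_const
        exact hf₂.continuousOn.comp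
          (by fun_prop)
          (fun t ht => hball (hseg t ht)))
    have hy' : ∀ t ∈ Set.Ico (0:ℝ) 1,
        HasDerivWithinAt y (deriv g (↑t * z) * z) (Set.Ici t) t := by
      intro t ht
      have htD : (↑t * z) ∈ D := hball (hseg t ⟨ht.1, le_of_lt ht.2⟩)
      have hgz : HasDerivAt g (deriv g (↑t * z)) (↑t * z) :=
        (hgdiff.differentiableAt (hD.mem_nhds htD)).hasDerivAt
      have hinner : HasDerivAt (fun w : ℂ => w * z) z (↑t : ℂ) := hasDerivAt_mul_const z
      have := (hgz.comp (↑t : ℂ) hinner).comp_ofReal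
      exact this.hasDerivWithinAt
    have hycont : ContinuousOn y (Set.Icc (0:ℝ) 1) := by
      apply hgdiff.continuousOn.comp (by fun_prop)
      exact fun t ht => hball (hseg t ht)
    have hy0 : ‖y 0‖ ≤ 0 := by
      have : y 0 = 0 := by
        simp only [hy_def, hg_def, Complex.ofReal_zero, zero_mul]
        linear_combination h0val
      simp [this]
    have bound : ∀ t ∈ Set.Ico (0:ℝ) 1,
        ‖deriv g (↑t * z) * z‖ ≤ K * ‖y t‖ + 0 := by
      intro t ht
      have htI : t ∈ Set.Icc (0:ℝ) 1 := ⟨ht.1, le_of_lt ht.2⟩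
      have htD : (↑t * z) ∈ D := hball (hseg t htI)
      rw [hderiv _ htD]
      have : ‖-2 * f₂ (↑t * z) * g (↑t * z) * z‖ = ‖-2 * f₂ (↑t * z) * z‖ * ‖y t‖ := by
        rw [← norm_mul]; ring_nf; rfl
      calc ‖-2 * f₂ (↑t * z) * g (↑t * z) * z‖ = ‖-2 * f₂ (↑t * z) * z‖ * ‖y t‖ := this
        _ ≤ K * ‖y t‖ + 0 := by
            have := hK t htI
            nlinarith [norm_nonneg (y t)]
    have := norm_le_gronwallBound_of_norm_deriv_right_le hycont hy' hy0 bound 1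
      (by constructor <;> norm_num)
    rw [gronwallBound_ε0_δ0] at this
    have hy1 : y 1 = g z := by simp [hy_def]
    have : ‖g z‖ ≤ 0 := by rwa [← hy1]
    simpa using norm_le_zero_iff.mp this
  -- identity theorem
  have hgan : AnalyticOnNhd ℂ g D := hgdiff.analyticOnNhd hD
  have hev : g =ᶠ[nhds (0:ℂ)] 0 :=
    Filter.eventually_of_mem (Metric.ball_mem_nhds 0 hr) key
  have hzero := hgan.eqOn_zero_of_preconnected_of_eventuallyEq_zero
    hconn.isPreconnected h0 hev
  intro z hz
  have := hzero hz
  simp only [hg_def, Pi.zero_apply] at this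
  linear_combination this
end

section
/- Let U ⊆ ℂ be open and let A, C, E : U → ℂ be holomorphic functions satisfying the system C′ = (1/8)·C·(E + A²), A·A′ = (1/8)·(A²·E + 2C⁴ − A⁴), E′ = (1/8)·(E² − A⁴) on U. Define F₁ = −C²/4, F₂ = −(E + A²)/8, F₃ = (−E + A²)/8. Then (F₁, F₂, F₃) satisfies the pillowcase WDVV system on U: F₁′ + 2F₁F₂ = 0, F₂′ + 2F₂F₃ + F₃′ = 0, and F₃′ + F₃² = F₁². -/
open Complex

/-- If `(A, C, E)` satisfies the `r = 4` Ramanujan system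
`C′ = (1/8)C(E + A²)`, `A·A′ = (1/8)(A²E + 2C⁴ − A⁴)`, `E′ = (1/8)(E² − A⁴)`,
then `F₁ = −C²/4`, `F₂ = −(E + A²)/8`, `F₃ = (−E + A²)/8` satisfy the pillowcase WDVV
system. -/
theorem ramanujan_r4_to_pillowcaseWDVV
    (U : Set ℂ) (hU : IsOpen U)
    (A C E : ℂ → ℂ)
    (hA : DifferentiableOn ℂ A U) (hC : DifferentiableOn ℂ C U)
    (hE : DifferentiableOn ℂ E U)
    (hsys : ∀ z ∈ U,
      deriv C z = 1 / 8 * C z * (E z + A z ^ 2) ∧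
      A z * deriv A z = 1 / 8 * (A z ^ 2 * E z + 2 * C z ^ 4 - A z ^ 4) ∧
      deriv E z = 1 / 8 * (E z ^ 2 - A z ^ 4)) :
    PillowcaseWDVV U
      (fun z => -(C z ^ 2) / 4)
      (fun z => -(E z + A z ^ 2) / 8)
      (fun z => (-E z + A z ^ 2) / 8) := by
  intro z hz
  have hmem := hU.mem_nhds hz
  have hA' : DifferentiableAt ℂ A z := hA.differentiableAt hmem
  have hC' : DifferentiableAt ℂ C z := hC.differentiableAt hmem
  have hE' : DifferentiableAt ℂ E z := hE.differentiableAt hmem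
  obtain ⟨h1, h2, h3⟩ := hsys z hz
  have e1 : deriv (fun z => -(C z ^ 2) / 4) z = -(2 * C z * deriv C z) / 4 := by
    have := ((hC'.hasDerivAt.pow 2).neg.div_const 4).deriv
    simpa using this
  have e2 : deriv (fun z => -(E z + A z ^ 2) / 8) z
      = -(deriv E z + 2 * A z * deriv A z) / 8 := by
    have := (((hE'.hasDerivAt.add (hA'.hasDerivAt.pow 2)).neg).div_const 8).deriv
    simpa using this
  have e3 : deriv (fun z => (-E z + A z ^ 2) / 8) z
      = (-deriv E z + 2 * A z * deriv A z) / 8 := by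
    have := (((hE'.hasDerivAt.neg.add (hA'.hasDerivAt.pow 2))).div_const 8).deriv
    simpa using this
  refine ⟨?_, ?_, ?_⟩
  · rw [e1]
    linear_combination (-(C z) / 2) * h1
  · rw [e2, e3]
    linear_combination (-1 / 4 : ℂ) * h3
  · rw [e3]
    linear_combination (-1 / 8 : ℂ) * h3 + (1 / 4 : ℂ) * h2
end
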